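/- Let R > 0 and c ∈ ℝ² with d := ‖c‖ > 0, and let X be a random point of ℝ² uniformly distributed on the closed disc of radius R centered at c. Then for every r with |R − d| < r < R + d, the function G(r) = P(‖X‖ ≤ r) is differentiable at r with derivative G′(r) = (2r/(πR²)) · arccos((r² + d² − R²)/(2 r d)). -/

import Mathlib

open MeasureTheory ProbabilityTheory Real

noncomputable section

/-- The plane ℝ². -/
abbrev Plane : Type := EuclideanSpace ℝ (Fin 2)


open Set

lemma arccos_lt_pi' {k : ℝ} (hk1 : -1 < k) : Real.arccos k < π :=
  lt_of_le_of_ne (Real.arccos_le_pi k) (fun h => absurd (Real.arccos_eq_pi.1 h) (by linarith))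

lemma cos_set_inter_Ioc (k : ℝ) (hk1 : -1 < k) (hk2 : k < 1) :
    {u : ℝ | k ≤ Real.cos u} ∩ Ioc (-π) π = Icc (-(Real.arccos k)) (Real.arccos k) := by
  have hA1 : 0 < Real.arccos k := Real.arccos_pos.2 hk2
  have hA2 : Real.arccos k < π := arccos_lt_pi' hk1
  have hcA : Real.cos (Real.arccos k) = k := Real.cos_arccos hk1.le hk2.le
  ext u
  simp only [mem_inter_iff, mem_setOf_eq, mem_Ioc, mem_Icc]
  constructor
  · rintro ⟨hcos, hu1, hu2⟩
    have habs : |u| ≤ Real.arccos k := by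
      by_contra h
      push_neg at h
      have h1 : Real.cos |u| < Real.cos (Real.arccos k) :=
        Real.strictAntiOn_cos ⟨Real.arccos_nonneg k, hA2.le⟩
          ⟨abs_nonneg u, abs_le.2 ⟨hu1.le, hu2⟩⟩ h
      rw [Real.cos_abs, hcA] at h1
      linarith
    exact abs_le.1 habs
  · rintro ⟨hu1, hu2⟩
    have habs : |u| ≤ Real.arccos k := abs_le.2 ⟨hu1, hu2⟩
    refine ⟨?_, by linarith, by linarith⟩
    have : Real.cos (Real.arccos k) ≤ Real.cos |u| :=
      Real.cos_le_cos_of_nonneg_of_le_pi (abs_nonneg u) hA2.le habs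
    rw [Real.cos_abs, hcA] at this
    exact this

lemma angle_measure (φ k : ℝ) (hk1 : -1 < k) (hk2 : k < 1) :
    volume {θ : ℝ | θ ∈ Ioo (-π) π ∧ k ≤ Real.cos (θ - φ)} =
      ENNReal.ofReal (2 * Real.arccos k) := by
  have hπ := Real.pi_pos
  set C : Set ℝ := {u | k ≤ Real.cos u} with hC
  have hCmeas : MeasurableSet C := measurableSet_le measurable_const Real.measurable_cos
  set f : ℝ → ℝ := C.indicator 1 with hf
  have hper : Function.Periodic f (2 * π) := by
    intro x
    simp [hf, Set.indicator_apply, hC, Real.cos_add_two_pi]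
  have hSeq : {θ : ℝ | θ ∈ Ioo (-π) π ∧ k ≤ Real.cos (θ - φ)}
      = (fun θ => θ - φ) ⁻¹' C ∩ Ioo (-π) π := by
    ext θ; simp only [mem_setOf_eq, mem_inter_iff, mem_preimage, hC, mem_setOf_eq]; tauto
  have hpre : MeasurableSet ((fun θ : ℝ => θ - φ) ⁻¹' C) :=
    hCmeas.preimage (measurable_id.sub measurable_const)
  have hIccvol : volume (C ∩ Ioc (-π) π) = ENNReal.ofReal (2 * Real.arccos k) := by
    rw [cos_set_inter_Ioc k hk1 hk2, Real.volume_Icc]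
    congr 1; ring
  have key : ∫ θ in (-π)..π, f (θ - φ) = 2 * Real.arccos k := by
    rw [intervalIntegral.integral_comp_sub_right f φ]
    have h2 := hper.intervalIntegral_add_eq (-π - φ) (-π)
    rw [show -π - φ + 2 * π = π - φ by ring, show -π + 2 * π = π by ring] at h2
    rw [h2, intervalIntegral.integral_of_le (by linarith : -π ≤ π), hf,
      MeasureTheory.integral_indicator_one hCmeas,
      measureReal_restrict_apply hCmeas, measureReal_def, hIccvol, ENNReal.toReal_ofReal]
    linarith [Real.arccos_nonneg k]
  -- now convert the LHS of `key` into the measure of the set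
  have key2 : ∫ θ in (-π)..π, f (θ - φ)
      = (volume ((fun θ : ℝ => θ - φ) ⁻¹' C ∩ Ioc (-π) π)).toReal := by
    rw [intervalIntegral.integral_of_le (by linarith : -π ≤ π)]
    have : (fun θ : ℝ => f (θ - φ)) = ((fun θ : ℝ => θ - φ) ⁻¹' C).indicator 1 := by
      ext θ; by_cases h : θ - φ ∈ C <;> simp [hf, Set.indicator_apply, h]
    rw [this, MeasureTheory.integral_indicator_one hpre, measureReal_restrict_apply hpre, measureReal_def]
  have hvol : volume ((fun θ : ℝ => θ - φ) ⁻¹' C ∩ Ioc (-π) π)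
      = ENNReal.ofReal (2 * Real.arccos k) := by
    have hfin : volume ((fun θ : ℝ => θ - φ) ⁻¹' C ∩ Ioc (-π) π) < ⊤ :=
      lt_of_le_of_lt (measure_mono inter_subset_right) (by rw [Real.volume_Ioc]; exact ENNReal.ofReal_lt_top)
    rw [← ENNReal.ofReal_toReal hfin.ne, ← key2, key]
  rw [hSeq, ← hvol]
  refine measure_congr (Filter.EventuallyEq.inter (Filter.EventuallyEq.refl _ _) ?_)
  exact MeasureTheory.Ioo_ae_eq_Ioc

lemma volume_set_polar (T : Set (ℝ × ℝ)) (hT : MeasurableSet T) :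
    volume T = ∫⁻ p in polarCoord.target ∩ (polarCoord.symm : ℝ × ℝ → ℝ × ℝ) ⁻¹' T,
      ENNReal.ofReal p.1 := by
  have hsymm_cont : Continuous (polarCoord.symm : ℝ × ℝ → ℝ × ℝ) := by
    have : (polarCoord.symm : ℝ × ℝ → ℝ × ℝ)
        = fun p => (p.1 * Real.cos p.2, p.1 * Real.sin p.2) := by
      funext p; exact polarCoord_symm_apply p
    rw [this]
    exact (continuous_fst.mul (Real.continuous_cos.comp continuous_snd)).prodMk
      (continuous_fst.mul (Real.continuous_sin.comp continuous_snd))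
  set E := polarCoord.target ∩ (polarCoord.symm : ℝ × ℝ → ℝ × ℝ) ⁻¹' T with hEdef
  have hEmeas : MeasurableSet E :=
    (polarCoord.open_target.measurableSet).inter (hT.preimage hsymm_cont.measurable)
  have himg : (polarCoord.symm : ℝ × ℝ → ℝ × ℝ) '' E = polarCoord.source ∩ T := by
    rw [hEdef, Set.image_inter_preimage, polarCoord.symm_image_target_eq_source]
  set B : ℝ × ℝ → ℝ × ℝ →L[ℝ] ℝ × ℝ := fun p =>
    LinearMap.toContinuousLinearMap (Matrix.toLin (Module.Basis.finTwoProd ℝ) (Module.Basis.finTwoProd ℝ)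
      !![Real.cos p.2, -p.1 * Real.sin p.2; Real.sin p.2, p.1 * Real.cos p.2]) with hB
  have B_det : ∀ p, (B p).det = p.1 := by
    intro p
    conv_rhs => rw [← one_mul p.1, ← Real.cos_sq_add_sin_sq p.2]
    simp only [hB, neg_mul, LinearMap.det_toContinuousLinearMap, LinearMap.det_toLin,
      Matrix.det_fin_two_of, sub_neg_eq_add]
    ring
  have hf' : ∀ p ∈ E, HasFDerivWithinAt (polarCoord.symm : ℝ × ℝ → ℝ × ℝ) (B p) E p :=
    fun p _ => (hasFDerivAt_polarCoord_symm p).hasFDerivWithinAt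
  have hinj : Set.InjOn (polarCoord.symm : ℝ × ℝ → ℝ × ℝ) E :=
    polarCoord.symm.injOn.mono (by rw [hEdef, polarCoord.symm_source]; exact inter_subset_left)
  have h1 : volume ((polarCoord.symm : ℝ × ℝ → ℝ × ℝ) '' E)
      = ∫⁻ p in E, ENNReal.ofReal |(B p).det| := by
    have := lintegral_image_eq_lintegral_abs_det_fderiv_mul volume hEmeas hf' hinj
      (fun _ => (1 : ENNReal))
    simpa using this
  have h2 : volume T = volume ((polarCoord.symm : ℝ × ℝ → ℝ × ℝ) '' E) := by
    rw [himg]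
    refine (measure_congr ?_).symm
    filter_upwards [polarCoord_source_ae_eq_univ] with p hp
    simp only [eq_iff_iff] at hp ⊢
    have hps : p ∈ polarCoord.source := hp.2 trivial
    rw [polarCoord_source] at hps
    exact ⟨fun h => h.2, fun h => ⟨hps, h⟩⟩
  rw [h2, h1]
  refine setLIntegral_congr_fun hEmeas (fun p hp => ?_)
  rw [B_det p, abs_of_pos]
  exact mem_Ioi.1 (mem_prod.1 hp.1).1

set_option maxHeartbeats 1000000 in
lemma lens_volume (R d c0 c1 : ℝ) (hR : 0 < R) (hd : 0 < d) (hc : c0 ^ 2 + c1 ^ 2 = d ^ 2)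
    (a b : ℝ) (ha : |R - d| < a) (hab : a ≤ b) (hb : b < R + d) :
    volume {q : ℝ × ℝ | a ^ 2 < q.1 ^ 2 + q.2 ^ 2 ∧ q.1 ^ 2 + q.2 ^ 2 ≤ b ^ 2 ∧
        (q.1 - c0) ^ 2 + (q.2 - c1) ^ 2 ≤ R ^ 2}
      = ENNReal.ofReal (∫ x in a..b,
          2 * x * Real.arccos ((x ^ 2 + d ^ 2 - R ^ 2) / (2 * x * d))) := by
  have ha0 : 0 < a := lt_of_le_of_lt (abs_nonneg _) ha
  set k : ℝ → ℝ := fun x => (x ^ 2 + d ^ 2 - R ^ 2) / (2 * x * d) with hk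
  -- the argument of c = (c0, c1)
  set z : ℂ := ⟨c0, c1⟩ with hz
  have habs : ‖z‖ = d := by
    rw [Complex.norm_def, Complex.normSq_mk]
    rw [show c0 * c0 + c1 * c1 = d ^ 2 by nlinarith]
    exact Real.sqrt_sq hd.le
  have hz0 : z ≠ 0 := by
    intro h; rw [h] at habs; simp at habs; linarith
  set φ : ℝ := Complex.arg z with hφ
  have hcosφ : Real.cos φ = c0 / d := by rw [hφ, Complex.cos_arg hz0, habs]
  have hsinφ : Real.sin φ = c1 / d := by rw [hφ, Complex.sin_arg, habs]
  -- key pointwise identity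
  have hkey : ∀ θ : ℝ, c0 * Real.cos θ + c1 * Real.sin θ = d * Real.cos (θ - φ) := by
    intro θ
    rw [Real.cos_sub, hcosφ, hsinφ]
    field_simp
  set T : Set (ℝ × ℝ) := {q : ℝ × ℝ | a ^ 2 < q.1 ^ 2 + q.2 ^ 2 ∧ q.1 ^ 2 + q.2 ^ 2 ≤ b ^ 2 ∧
        (q.1 - c0) ^ 2 + (q.2 - c1) ^ 2 ≤ R ^ 2} with hT
  have hTmeas : MeasurableSet T := by
    apply MeasurableSet.inter
    · exact measurableSet_lt measurable_const
        (((continuous_fst.pow 2).add (continuous_snd.pow 2)).measurable)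
    apply MeasurableSet.inter
    · exact measurableSet_le (((continuous_fst.pow 2).add (continuous_snd.pow 2)).measurable)
        measurable_const
    · exact measurableSet_le
        ((((continuous_fst.sub continuous_const).pow 2).add
          ((continuous_snd.sub continuous_const).pow 2)).measurable) measurable_const
  rw [volume_set_polar T hTmeas]
  -- identify the polar region
  have hEeq : polarCoord.target ∩ (polarCoord.symm : ℝ × ℝ → ℝ × ℝ) ⁻¹' T
      = {p : ℝ × ℝ | p.1 ∈ Ioc a b ∧ p.2 ∈ Ioo (-π) π ∧ k p.1 ≤ Real.cos (p.2 - φ)} := by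
    ext ⟨ρ, θ⟩
    simp only [mem_inter_iff, polarCoord_target, mem_prod, mem_Ioi, mem_preimage,
      polarCoord_symm_apply, hT, mem_setOf_eq, mem_Ioc, mem_Ioo, hk]
    have hpyth := Real.sin_sq_add_cos_sq θ
    have hsq : (ρ * Real.cos θ) ^ 2 + (ρ * Real.sin θ) ^ 2 = ρ ^ 2 := by
      linear_combination ρ ^ 2 * hpyth
    have hid : (ρ * Real.cos θ - c0) ^ 2 + (ρ * Real.sin θ - c1) ^ 2
        = ρ ^ 2 - 2 * ρ * (c0 * Real.cos θ + c1 * Real.sin θ) + d ^ 2 := by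
      linear_combination ρ ^ 2 * hpyth + hc
    rw [hsq, hid, hkey θ]
    constructor
    · rintro ⟨⟨hρ, hθ⟩, h1, h2, h3⟩
      have hρa : a < ρ := lt_of_pow_lt_pow_left₀ 2 (le_of_lt hρ) h1
      refine ⟨⟨hρa, le_of_pow_le_pow_left₀ two_ne_zero (by linarith) h2⟩, hθ, ?_⟩
      rw [div_le_iff₀ (by positivity)]
      nlinarith [h3]
    · rintro ⟨⟨hρa, hρb⟩, hθ, hcond⟩
      have hρ : 0 < ρ := lt_trans ha0 hρa
      rw [div_le_iff₀ (by positivity)] at hcond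
      exact ⟨⟨hρ, hθ⟩, by nlinarith, by nlinarith, by linarith [hcond]⟩
  rw [hEeq]
  set S : Set (ℝ × ℝ) := {p : ℝ × ℝ | p.1 ∈ Ioc a b ∧ p.2 ∈ Ioo (-π) π
      ∧ k p.1 ≤ Real.cos (p.2 - φ)} with hS
  have habs' := abs_lt.1 ha
  have hkbound : ∀ x : ℝ, a < x → x ≤ b → -1 < k x ∧ k x < 1 := by
    intro x hx1 hx2
    have hx0 : 0 < x := ha0.trans hx1
    have hpos : (0:ℝ) < 2 * x * d := by positivity
    constructor
    · rw [hk, lt_div_iff₀ hpos]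
      nlinarith [mul_pos (show (0:ℝ) < x + d - R by linarith)
        (show (0:ℝ) < x + d + R by linarith)]
    · rw [hk, div_lt_iff₀ hpos]
      nlinarith [mul_pos (show (0:ℝ) < R - (x - d) by linarith)
        (show (0:ℝ) < R + (x - d) by linarith)]
  have hkm : Measurable fun x : ℝ => k x := by
    apply Measurable.div
    · exact (measurable_id.pow_const 2).add_const _ |>.sub_const _
    · exact (measurable_const.mul measurable_id).mul_const d
  have hSmeas : MeasurableSet S := by
    apply MeasurableSet.inter
    · exact measurable_fst measurableSet_Ioc
    apply MeasurableSet.inter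
    · exact measurable_snd measurableSet_Ioo
    · exact measurableSet_le (hkm.comp measurable_fst)
        (Real.measurable_cos.comp ((measurable_snd.sub_const φ)))
  have hinner : ∀ x : ℝ, (∫⁻ y : ℝ, S.indicator (fun p : ℝ × ℝ => ENNReal.ofReal p.1) (x, y))
      = (Ioc a b).indicator
        (fun x => ENNReal.ofReal x * ENNReal.ofReal (2 * Real.arccos (k x))) x := by
    intro x
    by_cases hx : x ∈ Ioc a b
    · have hSm : MeasurableSet {y : ℝ | y ∈ Ioo (-π) π ∧ k x ≤ Real.cos (y - φ)} := by
        apply MeasurableSet.inter measurableSet_Ioo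
        exact measurableSet_le measurable_const
          (Real.measurable_cos.comp (measurable_id.sub_const φ))
      have heq : (fun y : ℝ => S.indicator (fun p : ℝ × ℝ => ENNReal.ofReal p.1) (x, y))
          = {y : ℝ | y ∈ Ioo (-π) π ∧ k x ≤ Real.cos (y - φ)}.indicator
            (fun _ => ENNReal.ofReal x) := by
        funext y
        simp only [Set.indicator_apply]
        by_cases hy : y ∈ {y : ℝ | y ∈ Ioo (-π) π ∧ k x ≤ Real.cos (y - φ)}
        · rw [if_pos hy, if_pos (show (x, y) ∈ S from ⟨hx, hy.1, hy.2⟩)]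
        · rw [if_neg hy, if_neg (show (x, y) ∉ S from fun hmem => hy ⟨hmem.2.1, hmem.2.2⟩)]
      rw [heq, lintegral_indicator hSm, setLIntegral_const,
        angle_measure φ (k x) (hkbound x hx.1 hx.2).1 (hkbound x hx.1 hx.2).2,
        Set.indicator_of_mem hx, mul_comm]
    · rw [Set.indicator_of_notMem hx]
      have heq : (fun y : ℝ => S.indicator (fun p : ℝ × ℝ => ENNReal.ofReal p.1) (x, y))
          = fun _ => 0 := by
        funext y
        exact Set.indicator_of_notMem (show (x, y) ∉ S from fun hmem => hx hmem.1) _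
      rw [heq]
      simp
  calc ∫⁻ p in S, ENNReal.ofReal p.1
      = ∫⁻ p : ℝ × ℝ, S.indicator (fun p : ℝ × ℝ => ENNReal.ofReal p.1) p := by
        rw [lintegral_indicator hSmeas]
    _ = ∫⁻ x : ℝ, ∫⁻ y : ℝ, S.indicator (fun p : ℝ × ℝ => ENNReal.ofReal p.1) (x, y) := by
        rw [Measure.volume_eq_prod ℝ ℝ, lintegral_prod]
        exact (Measurable.indicator (ENNReal.measurable_ofReal.comp measurable_fst)
          hSmeas).aemeasurable
    _ = ∫⁻ x : ℝ, (Ioc a b).indicator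
          (fun x => ENNReal.ofReal x * ENNReal.ofReal (2 * Real.arccos (k x))) x := by
        exact lintegral_congr hinner
    _ = ∫⁻ x in Ioc a b, ENNReal.ofReal x * ENNReal.ofReal (2 * Real.arccos (k x)) := by
        rw [lintegral_indicator measurableSet_Ioc]
    _ = ∫⁻ x in Ioc a b, ENNReal.ofReal (2 * x * Real.arccos (k x)) := by
        refine setLIntegral_congr_fun measurableSet_Ioc
          (fun x hx => ?_)
        rw [← ENNReal.ofReal_mul (le_of_lt (ha0.trans hx.1))]
        congr 1
        ring
    _ = ENNReal.ofReal (∫ x in Ioc a b, 2 * x * Real.arccos (k x)) := by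
        rw [MeasureTheory.ofReal_integral_eq_lintegral_ofReal]
        · have hcont : ContinuousOn (fun x : ℝ => 2 * x * Real.arccos (k x)) (Icc a b) := by
            apply ContinuousOn.mul
            · exact (continuous_const.mul continuous_id).continuousOn
            · apply Real.continuous_arccos.comp_continuousOn
              apply ContinuousOn.div
              · exact (((continuous_pow 2).add continuous_const).sub
                  continuous_const).continuousOn
              · exact ((continuous_const.mul continuous_id).mul
                  continuous_const).continuousOn
              · intro x hx
                have hx0 : 0 < x := lt_of_lt_of_le ha0 hx.1
                positivity
          exact (hcont.integrableOn_Icc).mono_set Ioc_subset_Icc_self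
        · rw [Filter.EventuallyLE, ae_restrict_iff' measurableSet_Ioc]
          refine Filter.Eventually.of_forall fun x hx => ?_
          have hx0 : 0 < x := ha0.trans hx.1
          have := Real.arccos_nonneg (k x)
          positivity
    _ = ENNReal.ofReal (∫ x in a..b, 2 * x * Real.arccos (k x)) := by
        rw [intervalIntegral.integral_of_le hab]

set_option maxHeartbeats 800000 in
lemma plane_lens (R : ℝ) (hR : 0 < R) (c : Plane) (hd : 0 < ‖c‖) (a b : ℝ)
    (ha : |R - ‖c‖| < a) (hab : a ≤ b) (hb : b < R + ‖c‖) :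
    volume ((Metric.closedBall (0 : Plane) b \ Metric.closedBall (0 : Plane) a)
        ∩ Metric.closedBall c R)
      = ENNReal.ofReal (∫ x in a..b,
          2 * x * Real.arccos ((x ^ 2 + ‖c‖ ^ 2 - R ^ 2) / (2 * x * ‖c‖))) := by
  have ha0 : 0 < a := lt_of_le_of_lt (abs_nonneg _) ha
  set d := ‖c‖ with hdd
  have hc : (c 0) ^ 2 + (c 1) ^ 2 = d ^ 2 := by
    have h1 : d = Real.sqrt ((c 0) ^ 2 + (c 1) ^ 2) := by
      rw [hdd, EuclideanSpace.norm_eq]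
      congr 1
      rw [Fin.sum_univ_two, Real.norm_eq_abs, Real.norm_eq_abs, sq_abs, sq_abs]
    rw [h1, Real.sq_sqrt (by positivity)]
  set T : Set (ℝ × ℝ) := {q : ℝ × ℝ | a ^ 2 < q.1 ^ 2 + q.2 ^ 2 ∧ q.1 ^ 2 + q.2 ^ 2 ≤ b ^ 2 ∧
        (q.1 - c 0) ^ 2 + (q.2 - c 1) ^ 2 ≤ R ^ 2} with hT
  have hTmeas : MeasurableSet T := by
    apply MeasurableSet.inter
    · exact measurableSet_lt measurable_const
        (((continuous_fst.pow 2).add (continuous_snd.pow 2)).measurable)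
    apply MeasurableSet.inter
    · exact measurableSet_le (((continuous_fst.pow 2).add (continuous_snd.pow 2)).measurable)
        measurable_const
    · exact measurableSet_le
        ((((continuous_fst.sub continuous_const).pow 2).add
          ((continuous_snd.sub continuous_const).pow 2)).measurable) measurable_const
  have MP : MeasurePreserving
      ((MeasurableEquiv.finTwoArrow : (Fin 2 → ℝ) ≃ᵐ ℝ × ℝ)
        ∘ (MeasurableEquiv.toLp 2 (Fin 2 → ℝ)).symm) volume volume :=
    (volume_preserving_finTwoArrow ℝ).comp
      (EuclideanSpace.volume_preserving_symm_measurableEquiv_toLp (Fin 2))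
  have hpre : ((MeasurableEquiv.finTwoArrow : (Fin 2 → ℝ) ≃ᵐ ℝ × ℝ)
        ∘ (MeasurableEquiv.toLp 2 (Fin 2 → ℝ)).symm) ⁻¹' T
      = (Metric.closedBall (0 : Plane) b \ Metric.closedBall (0 : Plane) a)
        ∩ Metric.closedBall c R := by
    ext p
    have happ : ((MeasurableEquiv.finTwoArrow : (Fin 2 → ℝ) ≃ᵐ ℝ × ℝ)
        ∘ (MeasurableEquiv.toLp 2 (Fin 2 → ℝ)).symm) p = (p 0, p 1) := rfl
    have hnorm : ‖p‖ = Real.sqrt ((p 0) ^ 2 + (p 1) ^ 2) := by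
      rw [EuclideanSpace.norm_eq]
      congr 1
      rw [Fin.sum_univ_two, Real.norm_eq_abs, Real.norm_eq_abs, sq_abs, sq_abs]
    have hnsq : ‖p‖ ^ 2 = (p 0) ^ 2 + (p 1) ^ 2 := by
      rw [hnorm, Real.sq_sqrt (by positivity)]
    have hdist : dist p c = Real.sqrt ((p 0 - c 0) ^ 2 + (p 1 - c 1) ^ 2) := by
      rw [EuclideanSpace.dist_eq]
      congr 1
      rw [Fin.sum_univ_two, Real.dist_eq, Real.dist_eq, sq_abs, sq_abs]
    have hdsq : dist p c ^ 2 = (p 0 - c 0) ^ 2 + (p 1 - c 1) ^ 2 := by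
      rw [hdist, Real.sq_sqrt (by positivity)]
    simp only [mem_preimage, happ, hT, mem_setOf_eq, mem_inter_iff, mem_diff,
      Metric.mem_closedBall, dist_zero_right]
    have hn0 : (0:ℝ) ≤ ‖p‖ := norm_nonneg p
    have hd0 : (0:ℝ) ≤ dist p c := dist_nonneg
    constructor
    · rintro ⟨h1, h2, h3⟩
      rw [← hnsq] at h1 h2
      rw [← hdsq] at h3
      refine ⟨⟨?_, ?_⟩, ?_⟩
      · exact le_of_pow_le_pow_left₀ two_ne_zero (by linarith) h2
      · intro hle
        have := pow_le_pow_left₀ hn0 hle 2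
        linarith
      · exact le_of_pow_le_pow_left₀ two_ne_zero hR.le h3
    · rintro ⟨⟨h1, h2⟩, h3⟩
      push_neg at h2
      rw [← hnsq, ← hdsq]
      exact ⟨pow_lt_pow_left₀ h2 ha0.le two_ne_zero, pow_le_pow_left₀ hn0 h1 2,
        pow_le_pow_left₀ hd0 h3 2⟩
  rw [← hpre, MP.measure_preimage hTmeas.nullMeasurableSet,
    lens_volume R d (c 0) (c 1) hR hd hc a b ha hab hb]

/-- If `X` is uniformly distributed on the closed disc of radius `R`
centered at `c`, with `d = ‖c‖ > 0`, then for `|R − d| < r < R + d` the function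
`G r = P(‖X‖ ≤ r)` is differentiable at `r` with derivative
`(2r/(πR²)) · arccos ((r² + d² − R²)/(2rd))`. -/
theorem uniform_disc_distance_density_lens
    {Ω : Type*} [MeasurableSpace Ω] (μ : Measure Ω) [IsProbabilityMeasure μ]
    (R : ℝ) (hR : 0 < R) (c : Plane) (hd : 0 < ‖c‖)
    (X : Ω → Plane) (hX : Measurable X)
    (hlaw : Measure.map X μ
      = (ENNReal.ofReal (π * R ^ 2))⁻¹ • volume.restrict (Metric.closedBall c R)) :
    ∀ r : ℝ, |R - ‖c‖| < r → r < R + ‖c‖ →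
      HasDerivAt (fun s => (μ {ω | ‖X ω‖ ≤ s}).toReal)
        ((2 * r / (π * R ^ 2)) * Real.arccos ((r ^ 2 + ‖c‖ ^ 2 - R ^ 2) / (2 * r * ‖c‖))) r := by
  intro r hr1 hr2
  have hπR : (0:ℝ) < π * R ^ 2 := by positivity
  set B := Metric.closedBall c R with hB
  set P : ENNReal := ENNReal.ofReal (π * R ^ 2) with hP
  have hP0 : P ≠ 0 := by
    rw [hP]; simpa using hπR
  have hPtop : P⁻¹ ≠ ⊤ := by
    simp [ENNReal.inv_ne_top, hP0]
  have hμval : ∀ s : ℝ, μ {ω | ‖X ω‖ ≤ s}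
      = P⁻¹ * volume (Metric.closedBall (0 : Plane) s ∩ B) := by
    intro s
    have hset : {ω | ‖X ω‖ ≤ s} = X ⁻¹' Metric.closedBall (0 : Plane) s := by
      ext ω; simp [Metric.mem_closedBall, dist_zero_right]
    rw [hset, ← Measure.map_apply hX measurableSet_closedBall, hlaw, hB,
      Measure.smul_apply, Measure.restrict_apply measurableSet_closedBall, smul_eq_mul, hP]
  set a : ℝ := (|R - ‖c‖| + r) / 2 with haa
  have ha1 : |R - ‖c‖| < a := by rw [haa]; linarith
  have ha2 : a < r := by rw [haa]; linarith
  have ha0 : 0 < a := lt_of_le_of_lt (abs_nonneg _) ha1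
  set ℓ : ℝ → ℝ :=
    fun x => 2 * x * Real.arccos ((x ^ 2 + ‖c‖ ^ 2 - R ^ 2) / (2 * x * ‖c‖)) with hℓ
  set Va := volume (Metric.closedBall (0 : Plane) a ∩ B) with hVa
  have hVafin : Va ≠ ⊤ := by
    refine ne_of_lt (lt_of_le_of_lt (measure_mono inter_subset_left) ?_)
    exact measure_closedBall_lt_top
  have hdecomp : ∀ s, a ≤ s → s < R + ‖c‖ →
      volume (Metric.closedBall (0 : Plane) s ∩ B)
        = Va + ENNReal.ofReal (∫ x in a..s, ℓ x) := by
    intro s hs1 hs2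
    have hunion : Metric.closedBall (0 : Plane) s ∩ B
        = (Metric.closedBall (0 : Plane) a ∩ B) ∪
          ((Metric.closedBall (0 : Plane) s \ Metric.closedBall (0 : Plane) a) ∩ B) := by
      ext p
      simp only [mem_inter_iff, mem_union, mem_diff, Metric.mem_closedBall]
      constructor
      · rintro ⟨h1, h2⟩
        by_cases h : dist p 0 ≤ a
        · exact Or.inl ⟨h, h2⟩
        · exact Or.inr ⟨⟨h1, h⟩, h2⟩
      · rintro (⟨h1, h2⟩ | ⟨⟨h1, h2⟩, h3⟩)
        · exact ⟨h1.trans hs1, h2⟩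
        · exact ⟨h1, h3⟩
    have hdisj : Disjoint (Metric.closedBall (0 : Plane) a ∩ B)
        ((Metric.closedBall (0 : Plane) s \ Metric.closedBall (0 : Plane) a) ∩ B) := by
      rw [Set.disjoint_left]
      rintro p ⟨hp1, _⟩ ⟨⟨_, hp3⟩, _⟩
      exact hp3 hp1
    have hmeas2 : MeasurableSet
        ((Metric.closedBall (0 : Plane) s \ Metric.closedBall (0 : Plane) a) ∩ B) :=
      (measurableSet_closedBall.diff measurableSet_closedBall).inter measurableSet_closedBall
    rw [hunion, measure_union hdisj hmeas2, ← hVa,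
      plane_lens R hR c hd a s ha1 hs1 hs2]
  have hInonneg : ∀ s, a ≤ s → 0 ≤ ∫ x in a..s, ℓ x := by
    intro s hs1
    apply intervalIntegral.integral_nonneg hs1
    intro x hx
    have hx0 : 0 < x := lt_of_lt_of_le ha0 hx.1
    have := Real.arccos_nonneg ((x ^ 2 + ‖c‖ ^ 2 - R ^ 2) / (2 * x * ‖c‖))
    rw [hℓ]
    positivity
  have hG : ∀ s, a ≤ s → s < R + ‖c‖ →
      (μ {ω | ‖X ω‖ ≤ s}).toReal
        = ((π * R ^ 2)⁻¹ * Va.toReal + (π * R ^ 2)⁻¹ * ∫ x in a..s, ℓ x) := by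
    intro s hs1 hs2
    rw [hμval s, hdecomp s hs1 hs2, mul_add, ENNReal.toReal_add
      (ENNReal.mul_ne_top hPtop hVafin)
      (ENNReal.mul_ne_top hPtop ENNReal.ofReal_ne_top),
      ENNReal.toReal_mul, ENNReal.toReal_mul, ENNReal.toReal_inv, hP,
      ENNReal.toReal_ofReal hπR.le, ENNReal.toReal_ofReal (hInonneg s hs1)]
  -- the comparison function
  set F : ℝ → ℝ :=
    fun s => (π * R ^ 2)⁻¹ * Va.toReal + (π * R ^ 2)⁻¹ * ∫ x in a..s, ℓ x with hF
  have hcontℓ : ContinuousOn ℓ (Ioi 0) := by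
    rw [hℓ]
    apply ContinuousOn.mul
    · exact (continuous_const.mul continuous_id).continuousOn
    · apply Real.continuous_arccos.comp_continuousOn
      apply ContinuousOn.div
      · exact (((continuous_pow 2).add continuous_const).sub continuous_const).continuousOn
      · exact ((continuous_const.mul continuous_id).mul continuous_const).continuousOn
      · intro x hx
        have : 0 < x := hx
        positivity
  have hint : IntervalIntegrable ℓ volume a r := by
    apply ContinuousOn.intervalIntegrable
    apply hcontℓ.mono
    rw [uIcc_of_le ha2.le]
    intro x hx
    exact lt_of_lt_of_le ha0 hx.1
  have hmeasAt : StronglyMeasurableAtFilter ℓ (nhds r) :=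
    hcontℓ.stronglyMeasurableAtFilter isOpen_Ioi r (ha0.trans ha2)
  have hcontAt : ContinuousAt ℓ r :=
    hcontℓ.continuousAt (isOpen_Ioi.mem_nhds (ha0.trans ha2))
  have hderivInt : HasDerivAt (fun s => ∫ x in a..s, ℓ x) (ℓ r) r :=
    intervalIntegral.integral_hasDerivAt_right hint hmeasAt hcontAt
  have h1 : HasDerivAt (fun s => (π * R ^ 2)⁻¹ * ∫ x in a..s, ℓ x)
      ((π * R ^ 2)⁻¹ * ℓ r) r := hderivInt.const_mul _
  have hFderiv : HasDerivAt F ((π * R ^ 2)⁻¹ * ℓ r) r :=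
    h1.const_add ((π * R ^ 2)⁻¹ * Va.toReal)
  have hEq : (fun s => (μ {ω | ‖X ω‖ ≤ s}).toReal) =ᶠ[nhds r] F := by
    have hmem : Ioo a (R + ‖c‖) ∈ nhds r := isOpen_Ioo.mem_nhds ⟨ha2, hr2⟩
    filter_upwards [hmem] with s hs
    exact hG s hs.1.le hs.2
  have hfinal := hFderiv.congr_of_eventuallyEq hEq
  refine hfinal.congr_deriv ?_
  simp only [hℓ]
  ring
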